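/- For every integer n ≥ 2, the OLA encoding Φ : RBT_n → C_{n−1} is a bijection from the set of leaf-ordered rooted binary trees on n leaves to the set of valid integer vectors C_{n−1}. -/

import Mathlib

/-- A rooted binary tree whose leaves carry natural-number labels. -/
inductive BTree : Type
  | leaf : ℕ → BTree
  | node : BTree → BTree → BTree
  deriving DecidableEq

namespace BTree

/-- The minimum leaf label in a tree (the "clade-founder" label of its root). -/
def minLeaf : BTree → ℕ
  | leaf j => j
  | node l r => min (minLeaf l) (minLeaf r)

/-- The label of the root node of a subtree: a leaf carries its own label,
and an internal node carries its canonical label `-CS`, where `CS` is the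
"clade-splitter" label, i.e. the maximum of the children's clade-founder labels. -/
def nodeLabel : BTree → ℤ
  | leaf j => (j : ℤ)
  | node l r => -(max (minLeaf l) (minLeaf r) : ℤ)

/-- The multiset of leaf labels of a tree. -/
def leafMultiset : BTree → Multiset ℕ
  | leaf j => {j}
  | node l r => leafMultiset l + leafMultiset r

/-- Canonical form for representing an *unordered* tree by an ordered one:
at each internal node the left subtree contains the smaller minimum leaf label. -/
def Canonical : BTree → Prop
  | leaf _ => True
  | node l r => minLeaf l < minLeaf r ∧ Canonical l ∧ Canonical r

/-- `IsRBT n T` : `T` is (the canonical representative of) a leaf-ordered rooted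
binary tree on `n` leaves, bijectively labeled `0, 1, ..., n-1`. -/
def IsRBT (n : ℕ) (T : BTree) : Prop :=
  Canonical T ∧ leafMultiset T = Multiset.range n

/-- Number of leaves. -/
def numLeaves : BTree → ℕ
  | leaf _ => 1
  | node l r => numLeaves l + numLeaves r

/-- Delete the leaf labeled `i` (together with its parent); return the label of
its sister node together with the remaining tree. -/
def deleteLeaf (i : ℕ) : BTree → Option (ℤ × BTree)
  | leaf _ => none
  | node l r =>
    if l = leaf i then some (nodeLabel r, r)
    else if r = leaf i then some (nodeLabel l, l)
    else
      match deleteLeaf i l with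
      | some (a, l') => some (a, node l' r)
      | none =>
        match deleteLeaf i r with
        | some (a, r') => some (a, node l r')
        | none => none

/-- Deconstruct a tree by removing leaves `m, m-1, ..., 1` in reverse order,
recording the (leaf or canonical internal) label of the sister of each removed leaf. -/
def olaEncodeAux : ℕ → BTree → List ℤ
  | 0, _ => []
  | m + 1, T =>
    match deleteLeaf (m + 1) T with
    | some (a, T') => olaEncodeAux m T' ++ [a]
    | none => []

/-- The OLA (ordered leaf attachment) encoding `(a_1, ..., a_{n-1})` of a tree on
`n` leaves: `a_i` is the label of the node that is the sister of leaf `i` at the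
step when leaf `i` is attached. -/
def olaEncode (T : BTree) : List ℤ := olaEncodeAux (numLeaves T - 1) T

/-- Attach a new leaf labeled `i` as the sister of the node whose label is `a`
(subdividing that node's parent edge). -/
def attachAt (a : ℤ) (i : ℕ) : BTree → BTree
  | leaf j => if (j : ℤ) = a then node (leaf j) (leaf i) else leaf j
  | node l r =>
    if nodeLabel (node l r) = a then node (node l r) (leaf i)
    else node (attachAt a i l) (attachAt a i r)

/-- Helper for OLA decoding: attach leaves `i, i+1, ...` at the recorded labels. -/
def olaDecodeAux : BTree → ℕ → List ℤ → BTree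
  | T, _, [] => T
  | T, i, a :: rest => olaDecodeAux (attachAt a i T) (i + 1) rest

/-- The OLA decoding: starting from the single leaf `0`, attach leaf `i` as the
sister of the node labeled `a_i`, for `i = 1, ..., n-1`. -/
def olaDecode (v : List ℤ) : BTree := olaDecodeAux (leaf 0) 1 v

end BTree

/-- `ValidCode v` : membership of `v = (a_1, ..., a_m)` in `C_m`, i.e. the entry
`a_i` (at list index `i - 1`) satisfies `-i < a_i < i`. -/
def ValidCode (v : List ℤ) : Prop :=
  ∀ i : Fin v.length, -((i : ℤ) + 1) < v.get i ∧ v.get i < (i : ℤ) + 1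

/-- The OLA distance: the Hamming distance between the OLA encodings. -/
def olaDist (T T' : BTree) : ℕ :=
  ((BTree.olaEncode T).zip (BTree.olaEncode T')).countP fun p => decide (p.1 ≠ p.2)

/-- One-hole contexts, marking the position of a subtree/edge in a tree. -/
inductive Ctx : Type
  | hole : Ctx
  | left : Ctx → BTree → Ctx
  | right : BTree → Ctx → Ctx
  deriving DecidableEq

/-- Fill the hole of a context with a tree. -/
def Ctx.fill : Ctx → BTree → BTree
  | .hole, T => T
  | .left c r, T => BTree.node (Ctx.fill c T) r
  | .right l c, T => BTree.node l (Ctx.fill c T)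

/-- Composition of contexts: `(c.comp d).fill X = c.fill (d.fill X)`. -/
def Ctx.comp : Ctx → Ctx → Ctx
  | .hole, d => d
  | .left c r, d => .left (Ctx.comp c d) r
  | .right l c, d => .right l (Ctx.comp c d)

/-- Equality of ordered binary trees as *unordered* trees (children may be swapped
at every internal node). -/
def TreeEquiv : BTree → BTree → Prop
  | .leaf i, .leaf j => i = j
  | .node l r, .node l' r' =>
      (TreeEquiv l l' ∧ TreeEquiv r r') ∨ (TreeEquiv l r' ∧ TreeEquiv r l')
  | _, _ => False

/-- `T'` is obtained from `T` by a single NNI move: contract an internal edge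
(the edge above the subtree `node A B`) and re-resolve the resulting degree-4
node in one of the two other possible ways (unordered). -/
def IsNNIMove (T T' : BTree) : Prop :=
  ∃ (c : Ctx) (A B C : BTree),
    TreeEquiv T (Ctx.fill c (BTree.node (BTree.node A B) C)) ∧
    TreeEquiv T' (Ctx.fill c (BTree.node (BTree.node A C) B))

/-- `T'` is obtained from `T` by a single rooted SPR move: prune the subtree `S`
(suppressing the resulting degree-2 node) and regraft it by subdividing an edge
of the remaining tree. -/
def IsSPRMove (T T' : BTree) : Prop :=
  ∃ (S : BTree) (c c' : Ctx) (X Y : BTree),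
    TreeEquiv T (Ctx.fill c (BTree.node S X)) ∧
    Ctx.fill c X = Ctx.fill c' Y ∧
    TreeEquiv T' (Ctx.fill c' (BTree.node S Y))

/-- The multiset of canonical labels of the internal nodes of a tree. -/
def internalLabels : BTree → Multiset ℤ
  | .leaf _ => 0
  | .node l r => BTree.nodeLabel (BTree.node l r) ::ₘ (internalLabels l + internalLabels r)

/-- `prune k T` : delete all leaves with label `≥ k` and suppress the resulting
degree-2 nodes (`none` if no leaf survives). -/
def prune (k : ℕ) : BTree → Option BTree
  | .leaf j => if j < k then some (.leaf j) else none
  | .node l r =>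
    match prune k l, prune k r with
    | some l', some r' => some (.node l' r')
    | some l', none => some l'
    | none, some r' => some r'
    | none, none => none

namespace BTree

lemma card_leafMultiset (T : BTree) : (leafMultiset T).card = numLeaves T := by
  induction T with
  | leaf j => rfl
  | node l r ihl ihr => simp [leafMultiset, numLeaves, ihl, ihr]

lemma minLeaf_mem (T : BTree) : minLeaf T ∈ leafMultiset T := by
  induction T with
  | leaf j => simp [leafMultiset, minLeaf]
  | node l r ihl ihr =>
    simp only [leafMultiset, minLeaf, Multiset.mem_add]
    rcases le_total (minLeaf l) (minLeaf r) with h | h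
    · rw [min_eq_left h]; exact Or.inl ihl
    · rw [min_eq_right h]; exact Or.inr ihr

lemma minLeaf_le {T : BTree} {j : ℕ} (h : j ∈ leafMultiset T) : minLeaf T ≤ j := by
  induction T with
  | leaf k => simp only [leafMultiset, Multiset.mem_singleton] at h; subst h; exact le_refl _
  | node l r ihl ihr =>
    simp only [leafMultiset, Multiset.mem_add] at h
    rcases h with h | h
    · exact le_trans (min_le_left _ _) (ihl h)
    · exact le_trans (min_le_right _ _) (ihr h)

lemma deleteLeaf_none {m : ℕ} {T : BTree} (h : m ∉ leafMultiset T) : deleteLeaf m T = none := by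
  induction T with
  | leaf j => rfl
  | node l r ihl ihr =>
    simp only [leafMultiset, Multiset.mem_add, not_or] at h
    have hl : l ≠ leaf m := by rintro rfl; exact h.1 (by simp [leafMultiset])
    have hr : r ≠ leaf m := by rintro rfl; exact h.2 (by simp [leafMultiset])
    simp [deleteLeaf, hl, hr, ihl h.1, ihr h.2]

lemma attachAt_eq_self {a : ℤ} {i : ℕ} {T : BTree}
    (h : ∀ j ∈ leafMultiset T, a ≠ (j : ℤ) ∧ a ≠ -(j : ℤ)) : attachAt a i T = T := by
  induction T with
  | leaf j =>
    have := h j (by simp [leafMultiset])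
    simp [attachAt, Ne.symm this.1]
  | node l r ihl ihr =>
    have hmax : max (minLeaf l) (minLeaf r) ∈ leafMultiset (node l r) := by
      simp only [leafMultiset, Multiset.mem_add]
      rcases le_total (minLeaf l) (minLeaf r) with hm | hm
      · rw [max_eq_right hm]; exact Or.inr (minLeaf_mem r)
      · rw [max_eq_left hm]; exact Or.inl (minLeaf_mem l)
    have hne : nodeLabel (node l r) ≠ a := by
      have := (h _ hmax).2
      simp only [nodeLabel]
      omega
    have hl' : attachAt a i l = l := ihl (fun j hj => h j (by simp [leafMultiset, hj]))
    have hr' : attachAt a i r = r := ihr (fun j hj => h j (by simp [leafMultiset, hj]))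
    simp only [attachAt, if_neg hne, hl', hr']

lemma attach_self (l : BTree) (m : ℕ) : attachAt (nodeLabel l) m l = node l (leaf m) := by
  cases l <;> simp [attachAt, nodeLabel]

/-- Auxiliary witness predicate: `a` is a valid label occurring in `T`. -/
def WitA (a : ℤ) (T : BTree) : Prop :=
  ∃ j ∈ leafMultiset T, a = (j : ℤ) ∨ (a = -(j : ℤ) ∧ minLeaf T < j)

lemma nodeLabel_witness (T : BTree) (hc : Canonical T) : WitA (nodeLabel T) T := by
  cases T with
  | leaf j => exact ⟨j, by simp [leafMultiset], Or.inl rfl⟩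
  | node x y =>
    obtain ⟨hxy, _, _⟩ := hc
    refine ⟨minLeaf y, by simp only [leafMultiset, Multiset.mem_add]; exact Or.inr (minLeaf_mem y), Or.inr ⟨?_, ?_⟩⟩
    · simp only [nodeLabel]; omega
    · simp only [minLeaf]; omega

lemma ne_of_wit {a : ℤ} {j k : ℕ} (hw : a = (j : ℤ) ∨ (a = -(j : ℤ) ∧ j ≠ 0))
    (hkj : k ≠ j) : a ≠ (k : ℤ) ∧ a ≠ -(k : ℤ) := by omega

lemma exists_attach_aux : ∀ (T : BTree) (m : ℕ), Canonical T → (leafMultiset T).Nodup →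
    (∀ j ∈ leafMultiset T, j ≤ m) → m ∈ leafMultiset T → T ≠ leaf m →
    ∃ (a : ℤ) (T' : BTree), Canonical T' ∧ leafMultiset T' = (leafMultiset T).erase m ∧
      minLeaf T' = minLeaf T ∧ attachAt a m T' = T ∧ WitA a T' := by
  intro T
  induction T with
  | leaf k =>
    intro m _ _ _ hm hne
    simp only [leafMultiset, Multiset.mem_singleton] at hm
    exact absurd (by rw [hm]) hne
  | node l r ihl ihr =>
    intro m hcan hnd hle hm _
    obtain ⟨hlr, hcl, hcr⟩ := hcan
    rw [show leafMultiset (node l r) = leafMultiset l + leafMultiset r from rfl] at hnd hle hm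
    rw [Multiset.nodup_add] at hnd
    obtain ⟨hndl, hndr, hdisj0⟩ := hnd
    have hdisj : ∀ {k : ℕ}, k ∈ leafMultiset l → k ∉ leafMultiset r :=
      fun h => Multiset.disjoint_left.1 hdisj0 h
    have hmlr : minLeaf r ≤ m := hle _ (Multiset.mem_add.2 (Or.inr (minLeaf_mem r)))
    by_cases hr1 : r = leaf m
    · subst hr1
      refine ⟨nodeLabel l, l, hcl, ?_, ?_, attach_self l m, nodeLabel_witness l hcl⟩
      · show leafMultiset l = (leafMultiset l + {m}).erase m
        rw [add_comm, Multiset.singleton_add, Multiset.erase_cons_head]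
      · have : minLeaf (leaf m) = m := rfl
        rw [this] at hlr
        show minLeaf l = min (minLeaf l) (minLeaf (leaf m))
        rw [this, min_eq_left hlr.le]
    · by_cases hmr : m ∈ leafMultiset r
      · obtain ⟨a, r', hcr', hlv', hmin', hatt', j, hj, hw⟩ :=
          ihr m hcr hndr (fun j hj => hle j (Multiset.mem_add.2 (Or.inr hj))) hmr hr1
        have hjr : j ∈ leafMultiset r := by
          have : j ∈ (leafMultiset r).erase m := by rw [← hlv']; exact hj
          exact Multiset.mem_of_mem_erase this
        have hjl : j ∉ leafMultiset l := fun h => hdisj h hjr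
        have hml0 : 0 < minLeaf r := by omega
        have hwne : a = (j : ℤ) ∨ (a = -(j : ℤ) ∧ j ≠ 0) := by
          rcases hw with h | ⟨h, hlt⟩
          · exact Or.inl h
          · exact Or.inr ⟨h, by omega⟩
        have hlab : nodeLabel (node l r') ≠ a := by
          simp only [nodeLabel]
          rcases hw with h | ⟨h, hlt⟩ <;> omega
        have hattl : attachAt a m l = l :=
          attachAt_eq_self (fun k hk => ne_of_wit hwne (fun e => hjl (e ▸ hk)))
        refine ⟨a, node l r', ⟨by omega, hcl, hcr'⟩, ?_, ?_, ?_, ?_⟩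
        · show leafMultiset l + leafMultiset r' = (leafMultiset l + leafMultiset r).erase m
          rw [hlv', Multiset.erase_add_right_pos _ hmr]
        · show min (minLeaf l) (minLeaf r') = min (minLeaf l) (minLeaf r)
          rw [hmin']
        · show attachAt a m (node l r') = node l r
          simp only [attachAt, if_neg hlab, hattl, hatt']
        · refine ⟨j, Multiset.mem_add.2 (Or.inr hj), ?_⟩
          rcases hw with h | ⟨h, hlt⟩
          · exact Or.inl h
          · refine Or.inr ⟨h, ?_⟩
            show min (minLeaf l) (minLeaf r') < j
            omega
      · have hml : m ∈ leafMultiset l := by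
          rcases Multiset.mem_add.1 hm with h | h
          · exact h
          · exact absurd h hmr
        have hl1 : l ≠ leaf m := by
          rintro rfl
          have : minLeaf (leaf m) = m := rfl
          omega
        obtain ⟨a, l', hcl', hlv', hmin', hatt', j, hj, hw⟩ :=
          ihl m hcl hndl (fun j hj => hle j (Multiset.mem_add.2 (Or.inl hj))) hml hl1
        have hjl : j ∈ leafMultiset l := by
          have : j ∈ (leafMultiset l).erase m := by rw [← hlv']; exact hj
          exact Multiset.mem_of_mem_erase this
        have hjr : j ∉ leafMultiset r := hdisj hjl
        have hmr0 : 0 < minLeaf r := by omega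
        have hminr_mem : minLeaf r ∈ leafMultiset r := minLeaf_mem r
        have hminr_ne : minLeaf r ≠ j := fun e => hjr (e ▸ hminr_mem)
        have hwne : a = (j : ℤ) ∨ (a = -(j : ℤ) ∧ j ≠ 0) := by
          rcases hw with h | ⟨h, hlt⟩
          · exact Or.inl h
          · exact Or.inr ⟨h, by omega⟩
        have hlab : nodeLabel (node l' r) ≠ a := by
          simp only [nodeLabel]
          have hmrj : (minLeaf r : ℤ) ≠ (j : ℤ) := by omega
          rcases hwne with h | ⟨h, hlt⟩ <;> omega
        have hattr : attachAt a m r = r :=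
          attachAt_eq_self (fun k hk => ne_of_wit hwne (fun e => hjr (e ▸ hk)))
        refine ⟨a, node l' r, ⟨by omega, hcl', hcr⟩, ?_, ?_, ?_, ?_⟩
        · show leafMultiset l' + leafMultiset r = (leafMultiset l + leafMultiset r).erase m
          rw [hlv', Multiset.erase_add_left_pos _ hml]
        · show min (minLeaf l') (minLeaf r) = min (minLeaf l) (minLeaf r)
          rw [hmin']
        · show attachAt a m (node l' r) = node l r
          simp only [attachAt, if_neg hlab, hattr, hatt']
        · refine ⟨j, Multiset.mem_add.2 (Or.inl hj), ?_⟩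
          rcases hw with h | ⟨h, hlt⟩
          · exact Or.inl h
          · refine Or.inr ⟨h, ?_⟩
            show min (minLeaf l') (minLeaf r) < j
            omega

lemma attach_aux : ∀ (T' : BTree) (m : ℕ) (a : ℤ), Canonical T' → (leafMultiset T').Nodup →
    (∀ j ∈ leafMultiset T', j < m) → WitA a T' →
    Canonical (attachAt a m T') ∧ leafMultiset (attachAt a m T') = m ::ₘ leafMultiset T' ∧
      minLeaf (attachAt a m T') = minLeaf T' ∧ deleteLeaf m (attachAt a m T') = some (a, T') := by
  intro T'
  induction T' with
  | leaf k =>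
    intro m a _ _ hle hwit
    obtain ⟨j, hj, hw⟩ := hwit
    simp only [leafMultiset, Multiset.mem_singleton] at hj
    subst hj
    have hkm : j < m := hle j (by simp [leafMultiset])
    have ha : a = (j : ℤ) := by
      rcases hw with h | ⟨h, hlt⟩
      · exact h
      · exact absurd hlt (by simp [minLeaf])
    subst ha
    have heq : attachAt (j : ℤ) m (leaf j) = node (leaf j) (leaf m) := by simp [attachAt]
    rw [heq]
    refine ⟨⟨?_, trivial, trivial⟩, ?_, ?_, ?_⟩
    · show minLeaf (leaf j) < minLeaf (leaf m)
      show j < m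
      exact hkm
    · show leafMultiset (leaf j) + leafMultiset (leaf m) = m ::ₘ leafMultiset (leaf j)
      show ({j} : Multiset ℕ) + {m} = m ::ₘ {j}
      rw [add_comm, Multiset.singleton_add]
    · show min (minLeaf (leaf j)) (minLeaf (leaf m)) = minLeaf (leaf j)
      show min j m = j
      omega
    · have hkm' : (leaf j : BTree) ≠ leaf m := by simp; omega
      simp [deleteLeaf, hkm', nodeLabel]
  | node x y ihx ihy =>
    intro m a hcan hnd hle hwit
    obtain ⟨hxy, hcx, hcy⟩ := hcan
    obtain ⟨j, hj, hw⟩ := hwit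
    rw [show leafMultiset (node x y) = leafMultiset x + leafMultiset y from rfl] at hnd hle hj
    rw [Multiset.nodup_add] at hnd
    obtain ⟨hndx, hndy, hdisj0⟩ := hnd
    have hdisj : ∀ {k : ℕ}, k ∈ leafMultiset x → k ∉ leafMultiset y :=
      fun h => Multiset.disjoint_left.1 hdisj0 h
    have hminx : minLeaf x < m := lt_of_le_of_lt (le_refl _)
      (hle _ (Multiset.mem_add.2 (Or.inl (minLeaf_mem x))))
    have hminT : minLeaf (node x y) = minLeaf x := by
      show min (minLeaf x) (minLeaf y) = minLeaf x
      omega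
    by_cases ha : nodeLabel (node x y) = a
    · have hatt : attachAt a m (node x y) = node (node x y) (leaf m) := by
        simp only [attachAt, if_pos ha]
      rw [hatt]
      refine ⟨⟨?_, ⟨hxy, hcx, hcy⟩, trivial⟩, ?_, ?_, ?_⟩
      · show minLeaf (node x y) < minLeaf (leaf m)
        show minLeaf (node x y) < m
        omega
      · show leafMultiset (node x y) + leafMultiset (leaf m) = m ::ₘ leafMultiset (node x y)
        show leafMultiset (node x y) + {m} = m ::ₘ leafMultiset (node x y)
        rw [add_comm, Multiset.singleton_add]
      · show min (minLeaf (node x y)) (minLeaf (leaf m)) = minLeaf (node x y)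
        show min (minLeaf (node x y)) m = minLeaf (node x y)
        omega
      · have h1 : (node x y) ≠ leaf m := by simp
        have h2 : (leaf m : BTree) = leaf m := rfl
        simp [deleteLeaf, ha]
    · rcases Multiset.mem_add.1 hj with hjx | hjy
      · have hjy' : j ∉ leafMultiset y := hdisj hjx
        have hwx : WitA a x := by
          refine ⟨j, hjx, ?_⟩
          rcases hw with h | ⟨h, hlt⟩
          · exact Or.inl h
          · exact Or.inr ⟨h, by omega⟩
        obtain ⟨c1, c2, c3, c4⟩ := ihx m a hcx hndx
          (fun k hk => hle k (Multiset.mem_add.2 (Or.inl hk))) hwx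
        have hwne : a = (j : ℤ) ∨ (a = -(j : ℤ) ∧ j ≠ 0) := by
          rcases hw with h | ⟨h, hlt⟩
          · exact Or.inl h
          · exact Or.inr ⟨h, by omega⟩
        have hatty : attachAt a m y = y :=
          attachAt_eq_self (fun k hk => ne_of_wit hwne (fun e => hjy' (e ▸ hk)))
        have hatt : attachAt a m (node x y) = node (attachAt a m x) y := by
          simp only [attachAt, if_neg ha, hatty]
        rw [hatt]
        have hxne : attachAt a m x ≠ leaf m := by
          intro h
          rw [h] at c4
          exact absurd c4 (by simp [deleteLeaf])
        have hyne : y ≠ leaf m := by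
          rintro rfl
          have : m ∈ leafMultiset (leaf m) := by simp [leafMultiset]
          exact absurd (hle m (Multiset.mem_add.2 (Or.inr this))) (by omega)
        refine ⟨⟨?_, c1, hcy⟩, ?_, ?_, ?_⟩
        · show minLeaf (attachAt a m x) < minLeaf y
          omega
        · show leafMultiset (attachAt a m x) + leafMultiset y =
            m ::ₘ (leafMultiset x + leafMultiset y)
          rw [c2, Multiset.cons_add]
        · show min (minLeaf (attachAt a m x)) (minLeaf y) = min (minLeaf x) (minLeaf y)
          rw [c3]
        · simp [deleteLeaf, hxne, hyne, c4]
      · have hjx' : j ∉ leafMultiset x := fun h => hdisj h hjy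
        have hjy1 : minLeaf y ≤ j := minLeaf_le hjy
        have hymax : nodeLabel (node x y) = -(minLeaf y : ℤ) := by
          simp only [nodeLabel]
          omega
        have hwy : WitA a y := by
          refine ⟨j, hjy, ?_⟩
          rcases hw with h | ⟨h, hlt⟩
          · exact Or.inl h
          · refine Or.inr ⟨h, ?_⟩
            rcases lt_or_eq_of_le hjy1 with h2 | h2
            · exact h2
            · exact absurd (by rw [hymax, h2]; exact h.symm) ha
        obtain ⟨c1, c2, c3, c4⟩ := ihy m a hcy hndy
          (fun k hk => hle k (Multiset.mem_add.2 (Or.inr hk))) hwy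
        have hwne : a = (j : ℤ) ∨ (a = -(j : ℤ) ∧ j ≠ 0) := by
          rcases hw with h | ⟨h, hlt⟩
          · exact Or.inl h
          · exact Or.inr ⟨h, by omega⟩
        have hattx : attachAt a m x = x :=
          attachAt_eq_self (fun k hk => ne_of_wit hwne (fun e => hjx' (e ▸ hk)))
        have hatt : attachAt a m (node x y) = node x (attachAt a m y) := by
          simp only [attachAt, if_neg ha, hattx]
        rw [hatt]
        have hyne : attachAt a m y ≠ leaf m := by
          intro h
          rw [h] at c4
          exact absurd c4 (by simp [deleteLeaf])
        have hxne : x ≠ leaf m := by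
          rintro rfl
          have : m ∈ leafMultiset (leaf m) := by simp [leafMultiset]
          exact absurd (hle m (Multiset.mem_add.2 (Or.inl this))) (by omega)
        have hdelx : deleteLeaf m x = none := deleteLeaf_none (fun h =>
          absurd (hle m (Multiset.mem_add.2 (Or.inl h))) (by omega))
        refine ⟨⟨?_, hcx, c1⟩, ?_, ?_, ?_⟩
        · show minLeaf x < minLeaf (attachAt a m y)
          omega
        · show leafMultiset x + leafMultiset (attachAt a m y) =
            m ::ₘ (leafMultiset x + leafMultiset y)
          rw [c2, Multiset.add_cons]
        · show min (minLeaf x) (minLeaf (attachAt a m y)) = min (minLeaf x) (minLeaf y)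
          rw [c3]
        · simp [deleteLeaf, hxne, hyne, hdelx, c4]

end BTree
namespace BTree

lemma numLeaves_pos (T : BTree) : 0 < numLeaves T := by
  induction T with
  | leaf j => exact Nat.one_pos
  | node l r ihl ihr => exact Nat.add_pos_left ihl _

lemma good_one {T : BTree} (hc : Canonical T) (hl : leafMultiset T = Multiset.range 1) :
    T = leaf 0 := by
  cases T with
  | leaf j =>
    have : j ∈ Multiset.range 1 := by rw [← hl]; simp [leafMultiset]
    rw [Multiset.mem_range] at this
    have : j = 0 := by omega
    rw [this]
  | node l r =>
    have hcard := card_leafMultiset (node l r)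
    rw [hl, Multiset.card_range] at hcard
    have h1 := numLeaves_pos l
    have h2 := numLeaves_pos r
    have : numLeaves (node l r) = numLeaves l + numLeaves r := rfl
    omega

lemma exists_attach {m : ℕ} {T : BTree} (hm : 1 ≤ m) (hc : Canonical T)
    (hl : leafMultiset T = Multiset.range (m + 1)) :
    ∃ (a : ℤ) (T' : BTree), Canonical T' ∧ leafMultiset T' = Multiset.range m ∧
      -(m : ℤ) < a ∧ a < m ∧ T = attachAt a m T' := by
  have hnd : (leafMultiset T).Nodup := by rw [hl]; exact Multiset.nodup_range _
  have hle : ∀ j ∈ leafMultiset T, j ≤ m := by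
    rw [hl]; intro j hj; rw [Multiset.mem_range] at hj; omega
  have hmm : m ∈ leafMultiset T := by rw [hl, Multiset.mem_range]; omega
  have hne : T ≠ leaf m := by
    rintro rfl
    have h0 : (0 : ℕ) ∈ leafMultiset (leaf m) := by rw [hl, Multiset.mem_range]; omega
    simp only [leafMultiset, Multiset.mem_singleton] at h0
    omega
  obtain ⟨a, T', hc', hlv', _, hatt, j, hj, hw⟩ := exists_attach_aux T m hc hnd hle hmm hne
  have hlv : leafMultiset T' = Multiset.range m := by
    rw [hlv', hl, Multiset.range_succ, Multiset.erase_cons_head]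
  have hjm : j < m := by rw [hlv, Multiset.mem_range] at hj; exact hj
  refine ⟨a, T', hc', hlv, ?_, ?_, hatt.symm⟩ <;> rcases hw with h | ⟨h, hlt⟩ <;> omega

lemma attach_good {m : ℕ} {T' : BTree} (hm : 1 ≤ m) (hc : Canonical T')
    (hl : leafMultiset T' = Multiset.range m) {a : ℤ} (h1 : -(m : ℤ) < a) (h2 : a < m) :
    Canonical (attachAt a m T') ∧
      leafMultiset (attachAt a m T') = Multiset.range (m + 1) ∧
      deleteLeaf m (attachAt a m T') = some (a, T') := by
  have hnd : (leafMultiset T').Nodup := by rw [hl]; exact Multiset.nodup_range _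
  have hle : ∀ j ∈ leafMultiset T', j < m := by
    rw [hl]; intro j hj; rwa [Multiset.mem_range] at hj
  have hmin0 : minLeaf T' = 0 := by
    have h0 : (0 : ℕ) ∈ leafMultiset T' := by rw [hl, Multiset.mem_range]; omega
    have := minLeaf_le h0; omega
  have hwit : WitA a T' := by
    rcases le_or_gt 0 a with hpos | hneg
    · exact ⟨a.toNat, by rw [hl, Multiset.mem_range]; omega, Or.inl (by omega)⟩
    · exact ⟨(-a).toNat, by rw [hl, Multiset.mem_range]; omega, Or.inr ⟨by omega, by omega⟩⟩
  obtain ⟨c1, c2, _, c4⟩ := attach_aux T' m a hc hnd hle hwit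
  exact ⟨c1, by rw [c2, hl, Multiset.range_succ], c4⟩

lemma validCode_nil : ValidCode [] := fun i => absurd i.2 (by simp)

lemma validCode_append {v : List ℤ} {a : ℤ} (hv : ValidCode v)
    (h1 : -((v.length : ℤ) + 1) < a) (h2 : a < (v.length : ℤ) + 1) :
    ValidCode (v ++ [a]) := by
  intro i
  rcases lt_or_ge (i : ℕ) v.length with h | h
  · have hg : (v ++ [a]).get i = v.get ⟨i, h⟩ := by
      simp only [List.get_eq_getElem]
      exact List.getElem_append_left h
    rw [hg]
    exact hv ⟨i, h⟩
  · have hi : (i : ℕ) = v.length := by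
      have := i.2; simp only [List.length_append, List.length_singleton] at this; omega
    have hg : (v ++ [a]).get i = a := by
      simp only [List.get_eq_getElem]
      rw [List.getElem_append_right h]
      simp [hi]
    rw [hg]
    constructor <;> omega

lemma validCode_of_append {v : List ℤ} {a : ℤ} (h : ValidCode (v ++ [a])) :
    ValidCode v ∧ -((v.length : ℤ) + 1) < a ∧ a < (v.length : ℤ) + 1 := by
  refine ⟨?_, ?_, ?_⟩
  · intro i
    have hi : (i : ℕ) < (v ++ [a]).length := by
      simp only [List.length_append, List.length_singleton]; omega
    have hh := h ⟨i, hi⟩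
    have hg : (v ++ [a]).get ⟨i, hi⟩ = v.get i := by
      simp only [List.get_eq_getElem]
      exact List.getElem_append_left i.2
    rw [hg] at hh
    exact hh
  · have hi : v.length < (v ++ [a]).length := by simp
    have hh := h ⟨v.length, hi⟩
    have hg : (v ++ [a]).get ⟨v.length, hi⟩ = a := by
      simp only [List.get_eq_getElem]
      rw [List.getElem_append_right (le_refl _)]
      simp
    rw [hg] at hh
    exact hh.1
  · have hi : v.length < (v ++ [a]).length := by simp
    have hh := h ⟨v.length, hi⟩
    have hg : (v ++ [a]).get ⟨v.length, hi⟩ = a := by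
      simp only [List.get_eq_getElem]
      rw [List.getElem_append_right (le_refl _)]
      simp
    rw [hg] at hh
    exact hh.2

lemma encode_spec : ∀ (m : ℕ) (T : BTree), Canonical T →
    leafMultiset T = Multiset.range (m + 1) →
    (olaEncodeAux m T).length = m ∧ ValidCode (olaEncodeAux m T) := by
  intro m
  induction m with
  | zero => intro T _ _; exact ⟨rfl, validCode_nil⟩
  | succ m ih =>
    intro T hc hl
    obtain ⟨a, T', hc', hl', h1, h2, rfl⟩ := exists_attach (by omega) hc hl
    obtain ⟨_, _, hdel⟩ := attach_good (m := m + 1) (by omega) hc' hl' h1 h2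
    have henc : olaEncodeAux (m + 1) (attachAt a (m + 1) T') = olaEncodeAux m T' ++ [a] := by
      simp only [olaEncodeAux, hdel]
    obtain ⟨hlen, hvalid⟩ := ih T' hc' hl'
    rw [henc]
    refine ⟨by simp [hlen], validCode_append hvalid ?_ ?_⟩ <;> rw [hlen] <;> omega

lemma encode_inj : ∀ (m : ℕ) (T₁ T₂ : BTree), Canonical T₁ →
    leafMultiset T₁ = Multiset.range (m + 1) → Canonical T₂ →
    leafMultiset T₂ = Multiset.range (m + 1) →
    olaEncodeAux m T₁ = olaEncodeAux m T₂ → T₁ = T₂ := by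
  intro m
  induction m with
  | zero =>
    intro T₁ T₂ hc1 hl1 hc2 hl2 _
    rw [good_one hc1 hl1, good_one hc2 hl2]
  | succ m ih =>
    intro T₁ T₂ hc1 hl1 hc2 hl2 he
    obtain ⟨a₁, T₁', hc1', hl1', h11, h12, rfl⟩ := exists_attach (by omega) hc1 hl1
    obtain ⟨a₂, T₂', hc2', hl2', h21, h22, rfl⟩ := exists_attach (by omega) hc2 hl2
    obtain ⟨_, _, hdel1⟩ := attach_good (m := m + 1) (by omega) hc1' hl1' h11 h12
    obtain ⟨_, _, hdel2⟩ := attach_good (m := m + 1) (by omega) hc2' hl2' h21 h22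
    have henc1 : olaEncodeAux (m + 1) (attachAt a₁ (m + 1) T₁') = olaEncodeAux m T₁' ++ [a₁] := by
      simp only [olaEncodeAux, hdel1]
    have henc2 : olaEncodeAux (m + 1) (attachAt a₂ (m + 1) T₂') = olaEncodeAux m T₂' ++ [a₂] := by
      simp only [olaEncodeAux, hdel2]
    rw [henc1, henc2] at he
    obtain ⟨he1, he2⟩ := List.append_inj' he rfl
    have ha : a₁ = a₂ := by simpa using he2
    rw [ha, ih T₁' T₂' hc1' hl1' hc2' hl2' he1]

lemma encode_surj : ∀ (m : ℕ) (v : List ℤ), v.length = m → ValidCode v →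
    ∃ T : BTree, Canonical T ∧ leafMultiset T = Multiset.range (m + 1) ∧
      olaEncodeAux m T = v := by
  intro m
  induction m with
  | zero =>
    intro v hlen _
    have hv : v = [] := List.eq_nil_of_length_eq_zero hlen
    subst hv
    refine ⟨leaf 0, trivial, ?_, rfl⟩
    rw [Multiset.range_succ, Multiset.range_zero]
    rfl
  | succ m ih =>
    intro v hlen hval
    have hne : v ≠ [] := by intro h; subst h; simp at hlen
    obtain ⟨w, b, rfl⟩ := (List.eq_nil_or_concat' v).resolve_left hne
    have hwlen : w.length = m := by
      simp only [List.length_append, List.length_singleton] at hlen; omega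
    obtain ⟨hvw, hb1, hb2⟩ := validCode_of_append hval
    rw [hwlen] at hb1 hb2
    obtain ⟨T', hc', hl', henc'⟩ := ih w hwlen hvw
    obtain ⟨c1, c2, c4⟩ := attach_good (m := m + 1) (a := b) (by omega) hc' hl'
      (by omega) (by omega)
    refine ⟨attachAt b (m + 1) T', c1, c2, ?_⟩
    simp only [olaEncodeAux, c4, henc']

end BTree
/-- For every `n ≥ 2`, the OLA encoding `Φ` is a bijection from the
set `RBT_n` of leaf-ordered rooted binary trees on `n` leaves onto the set
`C_{n-1} = {(a_1, ..., a_{n-1}) ∈ ℤ^{n-1} : -i < a_i < i}` of valid integer vectors. -/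
theorem ola_encode_bijective (n : ℕ) (hn : 2 ≤ n) :
    Set.BijOn BTree.olaEncode {T : BTree | BTree.IsRBT n T}
      {v : List ℤ | v.length = n - 1 ∧ ValidCode v} := by
  obtain ⟨m, rfl⟩ : ∃ m, n = m + 1 := ⟨n - 1, by omega⟩
  have hm : 1 ≤ m := by omega
  have henc : ∀ T : BTree, BTree.IsRBT (m + 1) T →
      BTree.olaEncode T = BTree.olaEncodeAux m T := by
    intro T hT
    have hnum : BTree.numLeaves T = m + 1 := by
      rw [← BTree.card_leafMultiset, hT.2, Multiset.card_range]
    rw [BTree.olaEncode, hnum]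
    norm_num
  refine ⟨?_, ?_, ?_⟩
  · intro T hT
    obtain ⟨hc, hl⟩ := hT
    obtain ⟨h1, h2⟩ := BTree.encode_spec m T hc hl
    rw [Set.mem_setOf_eq, henc T ⟨hc, hl⟩]
    exact ⟨by rw [h1]; omega, h2⟩
  · intro T₁ h₁ T₂ h₂ he
    rw [Set.mem_setOf_eq] at h₁ h₂
    rw [henc T₁ h₁, henc T₂ h₂] at he
    exact BTree.encode_inj m T₁ T₂ h₁.1 h₁.2 h₂.1 h₂.2 he
  · intro v hv
    obtain ⟨hlen, hval⟩ := hv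
    obtain ⟨T, hc, hl, he⟩ := BTree.encode_surj m v (by omega) hval
    exact ⟨T, ⟨hc, hl⟩, by rw [henc T ⟨hc, hl⟩]; exact he⟩
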